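/- For any positive integer s and real β ≥ 2, the sum over all primes p dividing s and all integers k with 1 ≤ k ≤ ⌊log_p(s)⌋ of log(p)·(1/β + 1/p^k)² is at most 1.78 + 2·log(s)/β + log²(s)/β². In particular, if β ≥ log(s), this sum is at most 5. -/

import Mathlib

open Real Finset

lemma logb_nat_le {p k : ℕ} (hp : 1 ≤ p) (h : p ≤ 2 ^ k) : Real.logb 2 p ≤ k := by
  calc Real.logb 2 p ≤ Real.logb 2 ((2:ℝ) ^ k) := by
        apply Real.logb_le_logb_of_le one_lt_two (by exact_mod_cast hp)
        exact_mod_cast h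
    _ = k := by rw [Real.logb_pow, Real.logb_self_eq_one (by norm_num : (1:ℝ) < 2), mul_one]

lemma logb_nat_nonneg {p : ℕ} (hp : 1 ≤ p) : 0 ≤ Real.logb 2 p :=
  Real.logb_nonneg one_lt_two (by exact_mod_cast hp)

lemma geom_Icc_le {x : ℝ} (h0 : 0 ≤ x) (h1 : x < 1) (m : ℕ) :
    ∑ k ∈ Finset.Icc 1 m, x ^ k ≤ x / (1 - x) := by
  have hx : 0 < 1 - x := by linarith
  have key : ∀ m : ℕ, ∑ k ∈ Finset.Icc 1 m, x ^ k ≤ (x - x ^ (m+1)) / (1 - x) := by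
    intro m
    induction m with
    | zero => simp
    | succ n ih =>
      rw [Finset.sum_Icc_succ_top (Nat.le_add_left 1 n)]
      have hxp : 0 ≤ x ^ (n+1) := pow_nonneg h0 _
      have : (x - x ^ (n+1)) / (1-x) + x ^ (n+1) = (x - x^(n+2))/(1-x) := by
        field_simp; ring
      linarith [ih, this]
  refine (key m).trans ?_
  have : 0 ≤ x ^ (m+1) := pow_nonneg h0 _
  apply div_le_div_of_nonneg_right (by linarith) hx.le

noncomputable def gg (n : ℕ) : ℝ := 1 / Real.sqrt n

lemma tel_sum (b : ℕ) (hb : 63 ≤ b) :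
    ∑ n ∈ Finset.Icc 64 b, (gg (n-1) - gg n) = gg 63 - gg b := by
  induction b, hb using Nat.le_induction with
  | base => simp
  | succ n hn ih =>
    rw [Finset.sum_Icc_succ_top (by omega), ih]
    simp

lemma gg_anti {a b : ℕ} (ha : 0 < a) (h : a ≤ b) : gg b ≤ gg a := by
  unfold gg
  apply one_div_le_one_div_of_le
  · exact Real.sqrt_pos.mpr (by exact_mod_cast ha)
  · exact Real.sqrt_le_sqrt (by exact_mod_cast h)

lemma gg_nonneg (n : ℕ) : 0 ≤ gg n := by
  unfold gg; positivity

-- per-term tail bound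
lemma tail_term {x : ℝ} (hx : 2 ≤ x) :
    Real.logb 2 x / (x^2 - 1) ≤ (4 / Real.log 2) * (1/Real.sqrt (x-1) - 1/Real.sqrt x) := by
  have hl2 : (0:ℝ) < Real.log 2 := Real.log_pos (by norm_num)
  set a := Real.sqrt x with ha
  set b := Real.sqrt (x-1) with hb
  have ha2 : a^2 = x := Real.sq_sqrt (by linarith)
  have hb2 : b^2 = x - 1 := Real.sq_sqrt (by linarith)
  have hbpos : 0 < b := Real.sqrt_pos.mpr (by linarith)
  have ha1 : 1 ≤ a := by
    rw [ha]; rw [show (1:ℝ) = Real.sqrt 1 by simp]; exact Real.sqrt_le_sqrt (by linarith)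
  have hba : b ≤ a := Real.sqrt_le_sqrt (by linarith)
  have hax : a ≤ x := by nlinarith
  have hlog : Real.log x ≤ 2*(a-1) := by
    have : Real.log x = 2 * Real.log a := by
      rw [ha, Real.log_sqrt (by linarith)]; ring
    rw [this]
    have := Real.log_le_sub_one_of_pos (show (0:ℝ) < a by linarith)
    linarith
  have hlog0 : 0 ≤ Real.log x := Real.log_nonneg (by linarith)
  have hx2 : 0 < x^2 - 1 := by nlinarith
  -- rewrite RHS
  have hdiff : 1/b - 1/a = 1/(a*b*(a+b)) := by
    rw [div_sub_div _ _ (ne_of_gt hbpos) (by linarith : a ≠ 0)]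
    rw [div_eq_div_iff (by positivity) (by positivity)]
    have key : (a-b)*(a+b) = 1 := by nlinarith
    linear_combination (a*b) * key
  rw [hdiff]
  set T := a*b*(a+b) with hTdef
  have hTpos : 0 < T := by positivity
  have hrhs : (4 / Real.log 2) * (1/T) = 4 / (Real.log 2 * T) := by
    field_simp
  rw [hrhs, Real.logb, div_div]
  rw [div_le_div_iff₀ (by positivity) (by positivity)]
  have hT : T ≤ 2*x*a := by
    have : T ≤ a*a*(a+a) := by
      apply mul_le_mul (mul_le_mul_of_nonneg_left hba (by linarith)) (by linarith) (by linarith) (by nlinarith)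
    nlinarith
  have h1 : Real.log x * (Real.log 2 * T) ≤ 2*(a-1) * (Real.log 2 * T) :=
    mul_le_mul_of_nonneg_right hlog (by positivity)
  have h2 : 2*(a-1) * (Real.log 2 * T) ≤ 2*(a-1) * (Real.log 2 * (2*x*a)) := by
    apply mul_le_mul_of_nonneg_left (mul_le_mul_of_nonneg_left hT hl2.le) (by linarith)
  have h3 : 2*(a-1) * (Real.log 2 * (2*x*a)) ≤ 4 * (Real.log 2 * (x^2-1)) := by
    have key : 4*x*a*(a-1) ≤ 4*(x^2-1) := by nlinarith
    nlinarith [mul_le_mul_of_nonneg_left key hl2.le]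
  linarith

lemma term_nonneg {p : ℕ} (hp : p.Prime) : 0 ≤ Real.logb 2 p / ((p:ℝ)^2 - 1) := by
  have h2 : 2 ≤ p := hp.two_le
  have : (0:ℝ) < (p:ℝ)^2 - 1 := by
    have : (2:ℝ) ≤ p := by exact_mod_cast h2
    nlinarith
  exact div_nonneg (logb_nat_nonneg (by omega)) this.le

lemma mySmallSum (s : ℕ) :
    ∑ p ∈ s.primeFactors.filter (· < 64), Real.logb 2 p / ((p:ℝ)^2 - 1) ≤ 0.9 := by
  have hsub : s.primeFactors.filter (· < 64) ⊆ Nat.primesBelow 64 := by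
    intro p hp
    simp only [Finset.mem_filter, Nat.mem_primeFactors] at hp
    exact Nat.mem_primesBelow.mpr ⟨hp.2, hp.1.1⟩
  refine le_trans (Finset.sum_le_sum_of_subset_of_nonneg hsub ?_) ?_
  · intro p hp _
    exact term_nonneg (Nat.prime_of_mem_primesBelow hp)
  · rw [show Nat.primesBelow 64 = {2,3,5,7,11,13,17,19,23,29,31,37,41,43,47,53,59,61} from by decide]
    rw [Finset.sum_insert (by decide), Finset.sum_insert (by decide), Finset.sum_insert (by decide),
      Finset.sum_insert (by decide), Finset.sum_insert (by decide), Finset.sum_insert (by decide),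
      Finset.sum_insert (by decide), Finset.sum_insert (by decide), Finset.sum_insert (by decide),
      Finset.sum_insert (by decide), Finset.sum_insert (by decide), Finset.sum_insert (by decide),
      Finset.sum_insert (by decide), Finset.sum_insert (by decide), Finset.sum_insert (by decide),
      Finset.sum_insert (by decide), Finset.sum_insert (by decide), Finset.sum_singleton]
    have b2 : Real.logb 2 (2:ℕ) ≤ (1:ℕ) := logb_nat_le (by norm_num) (by norm_num)
    have b3 : Real.logb 2 (3:ℕ) ≤ (2:ℕ) := logb_nat_le (by norm_num) (by norm_num)
    have b5 : Real.logb 2 (5:ℕ) ≤ (3:ℕ) := logb_nat_le (by norm_num) (by norm_num)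
    have b7 : Real.logb 2 (7:ℕ) ≤ (3:ℕ) := logb_nat_le (by norm_num) (by norm_num)
    have b11 : Real.logb 2 (11:ℕ) ≤ (4:ℕ) := logb_nat_le (by norm_num) (by norm_num)
    have b13 : Real.logb 2 (13:ℕ) ≤ (4:ℕ) := logb_nat_le (by norm_num) (by norm_num)
    have b17 : Real.logb 2 (17:ℕ) ≤ (5:ℕ) := logb_nat_le (by norm_num) (by norm_num)
    have b19 : Real.logb 2 (19:ℕ) ≤ (5:ℕ) := logb_nat_le (by norm_num) (by norm_num)
    have b23 : Real.logb 2 (23:ℕ) ≤ (5:ℕ) := logb_nat_le (by norm_num) (by norm_num)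
    have b29 : Real.logb 2 (29:ℕ) ≤ (5:ℕ) := logb_nat_le (by norm_num) (by norm_num)
    have b31 : Real.logb 2 (31:ℕ) ≤ (5:ℕ) := logb_nat_le (by norm_num) (by norm_num)
    have b37 : Real.logb 2 (37:ℕ) ≤ (6:ℕ) := logb_nat_le (by norm_num) (by norm_num)
    have b41 : Real.logb 2 (41:ℕ) ≤ (6:ℕ) := logb_nat_le (by norm_num) (by norm_num)
    have b43 : Real.logb 2 (43:ℕ) ≤ (6:ℕ) := logb_nat_le (by norm_num) (by norm_num)
    have b47 : Real.logb 2 (47:ℕ) ≤ (6:ℕ) := logb_nat_le (by norm_num) (by norm_num)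
    have b53 : Real.logb 2 (53:ℕ) ≤ (6:ℕ) := logb_nat_le (by norm_num) (by norm_num)
    have b59 : Real.logb 2 (59:ℕ) ≤ (6:ℕ) := logb_nat_le (by norm_num) (by norm_num)
    have b61 : Real.logb 2 (61:ℕ) ≤ (6:ℕ) := logb_nat_le (by norm_num) (by norm_num)
    push_cast at b2 b3 b5 b7 b11 b13 b17 b19 b23 b29 b31 b37 b41 b43 b47 b53 b59 b61 ⊢
    norm_num
    linarith

lemma big_sum (s : ℕ) (hs : 0 < s) :
    ∑ p ∈ s.primeFactors.filter (fun p => ¬ p < 64), Real.logb 2 p / ((p:ℝ)^2 - 1) ≤ 0.88 := by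
  have hlog2 : (0.6931471803:ℝ) < Real.log 2 := Real.log_two_gt_d9
  have step1 : ∑ p ∈ s.primeFactors.filter (fun p => ¬ p < 64), Real.logb 2 p / ((p:ℝ)^2 - 1)
      ≤ ∑ p ∈ s.primeFactors.filter (fun p => ¬ p < 64), (4 / Real.log 2) * (gg (p-1) - gg p) := by
    apply Finset.sum_le_sum
    intro p hp
    simp only [Finset.mem_filter, Nat.mem_primeFactors, not_lt] at hp
    have hp64 : 64 ≤ p := hp.2
    have hx : (2:ℝ) ≤ (p:ℝ) := by exact_mod_cast le_trans (by norm_num) hp64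
    have := tail_term hx
    refine this.trans (le_of_eq ?_)
    unfold gg
    congr 2
    push_cast [Nat.cast_sub (by omega : 1 ≤ p)]
    ring
  refine step1.trans ?_
  rw [← Finset.mul_sum]
  have hsub : s.primeFactors.filter (fun p => ¬ p < 64) ⊆ Finset.Icc 64 s := by
    intro p hp
    simp only [Finset.mem_filter, Nat.mem_primeFactors, not_lt] at hp
    exact Finset.mem_Icc.mpr ⟨hp.2, Nat.le_of_dvd hs hp.1.2.1⟩
  have hmono : ∑ p ∈ s.primeFactors.filter (fun p => ¬ p < 64), (gg (p-1) - gg p)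
      ≤ ∑ p ∈ Finset.Icc 64 s, (gg (p-1) - gg p) := by
    apply Finset.sum_le_sum_of_subset_of_nonneg hsub
    intro p hp _
    have : 64 ≤ p := (Finset.mem_Icc.mp hp).1
    have := gg_anti (a := p - 1) (b := p) (by omega) (by omega)
    linarith
  have htel : ∑ p ∈ Finset.Icc 64 s, (gg (p-1) - gg p) ≤ gg 63 := by
    rcases le_or_gt 63 s with h | h
    · rw [tel_sum s h]
      have := gg_nonneg s
      linarith
    · rw [Finset.Icc_eq_empty (by omega)]
      simp [gg_nonneg 63]
  have h63 : (7.93:ℝ) ≤ Real.sqrt 63 := by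
    rw [show (63:ℝ) = 63 from rfl]
    nlinarith [Real.sq_sqrt (by norm_num : (0:ℝ) ≤ 63), Real.sqrt_nonneg (63:ℝ)]
  have hgg63 : gg 63 ≤ 1 / 7.93 := by
    unfold gg
    apply one_div_le_one_div_of_le (by norm_num)
    exact_mod_cast h63
  have hconst : (0:ℝ) < 4 / Real.log 2 := by positivity
  calc (4 / Real.log 2) * ∑ p ∈ s.primeFactors.filter (fun p => ¬ p < 64), (gg (p-1) - gg p)
      ≤ (4 / Real.log 2) * (1/7.93) := by
        apply mul_le_mul_of_nonneg_left (le_trans hmono (le_trans htel hgg63)) hconst.le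
    _ ≤ (4 / 0.6931471803) * (1/7.93) := by
        apply mul_le_mul_of_nonneg_right _ (by norm_num)
        apply div_le_div_of_nonneg_left (by norm_num) (by norm_num) hlog2.le
    _ ≤ 0.88 := by norm_num

lemma C_lemma (s : ℕ) (hs : 0 < s) :
    ∑ p ∈ s.primeFactors, Real.logb 2 p / ((p:ℝ)^2 - 1) ≤ 1.78 := by
  rw [← Finset.sum_filter_add_sum_filter_not s.primeFactors (fun p => p < 64)]
  have := mySmallSum s
  have := big_sum s hs
  linarith [mySmallSum s, big_sum s hs]

lemma sum_logb_le (s : ℕ) (hs : 0 < s) :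
    ∑ p ∈ s.primeFactors, Real.logb 2 p ≤ Real.logb 2 s := by
  have hprod : (∏ p ∈ s.primeFactors, p) ∣ s := Nat.prod_primeFactors_dvd s
  have hpos : ∀ p ∈ s.primeFactors, (0:ℝ) < p := by
    intro p hp
    exact_mod_cast (Nat.prime_of_mem_primeFactors hp).pos
  have h1 : ∑ p ∈ s.primeFactors, Real.logb 2 p = Real.logb 2 (∏ p ∈ s.primeFactors, (p:ℝ)) := by
    unfold Real.logb
    rw [← Finset.sum_div, Real.log_prod (fun p hp => (hpos p hp).ne')]
  rw [h1, ← Nat.cast_prod]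
  apply Real.logb_le_logb_of_le one_lt_two
  · exact_mod_cast Finset.prod_pos (fun p hp => (Nat.prime_of_mem_primeFactors hp).pos)
  · exact_mod_cast Nat.le_of_dvd hs hprod

lemma natlog_le_logb (s p : ℕ) (hs : 0 < s) (hp : 2 ≤ p) :
    (Nat.log p s : ℝ) ≤ Real.logb 2 s := by
  have h1 : 2 ^ Nat.log p s ≤ s :=
    le_trans (Nat.pow_le_pow_left hp _) (Nat.pow_log_le_self p hs.ne')
  calc (Nat.log p s : ℝ) = Real.logb 2 ((2:ℝ) ^ Nat.log p s) := by
        rw [Real.logb_pow, Real.logb_self_eq_one (by norm_num : (1:ℝ) < 2), mul_one]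
    _ ≤ Real.logb 2 s := by
        apply Real.logb_le_logb_of_le one_lt_two (by positivity)
        exact_mod_cast h1

lemma inner_bound (p m : ℕ) (hp : 2 ≤ p) (β : ℝ) (hβ : 2 ≤ β) :
    ∑ k ∈ Finset.Icc 1 m, (1/β + 1/(p:ℝ)^k)^2
      ≤ (m:ℝ)/β^2 + (2/β) * (1/((p:ℝ)-1)) + 1/((p:ℝ)^2-1) := by
  have hpR : (2:ℝ) ≤ (p:ℝ) := by exact_mod_cast hp
  have hβ0 : (0:ℝ) < β := by linarith
  have hp0 : (0:ℝ) < (p:ℝ) := by linarith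
  have hx0 : (0:ℝ) ≤ 1/(p:ℝ) := by positivity
  have hx1 : 1/(p:ℝ) < 1 := by rw [div_lt_one hp0]; linarith
  have hexp : ∀ k ∈ Finset.Icc 1 m, (1/β + 1/(p:ℝ)^k)^2
      = 1/β^2 + (2/β)*((1/(p:ℝ))^k) + ((1/(p:ℝ))^2)^k := by
    intro k _
    rw [← one_div_pow]
    ring
  rw [Finset.sum_congr rfl hexp, Finset.sum_add_distrib, Finset.sum_add_distrib,
    Finset.sum_const, Nat.card_Icc]
  have g1 : ∑ k ∈ Finset.Icc 1 m, (2/β)*((1/(p:ℝ))^k) ≤ (2/β) * (1/((p:ℝ)-1)) := by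
    rw [← Finset.mul_sum]
    apply mul_le_mul_of_nonneg_left _ (by positivity)
    refine (geom_Icc_le hx0 hx1 m).trans (le_of_eq ?_)
    rw [div_eq_div_iff (by linarith) (by linarith)]
    field_simp
  have g2 : ∑ k ∈ Finset.Icc 1 m, ((1/(p:ℝ))^2)^k ≤ 1/((p:ℝ)^2-1) := by
    have h0 : (0:ℝ) ≤ (1/(p:ℝ))^2 := by positivity
    have h1 : (1/(p:ℝ))^2 < 1 := by nlinarith
    refine (geom_Icc_le h0 h1 m).trans (le_of_eq ?_)
    rw [div_eq_div_iff (by nlinarith) (by nlinarith)]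
    field_simp
  have hconst : (m + 1 - 1) • (1/β^2) = (m:ℝ)/β^2 := by
    simp [nsmul_eq_mul, div_eq_mul_inv]
  rw [hconst]
  linarith

/-- For a positive integer `s` and real `β ≥ 2`, the sum over
primes `p ∣ s` and `1 ≤ k ≤ ⌊log_p s⌋` of `log₂(p)·(1/β + 1/p^k)²` is at most
`1.78 + 2·log₂(s)/β + log₂²(s)/β²`; if moreover `β ≥ log₂ s`, it is at most 5. -/
theorem stmt_2 (s : ℕ) (hs : 0 < s) (β : ℝ) (hβ : 2 ≤ β) :
    (∑ p ∈ s.primeFactors, ∑ k ∈ Finset.Icc 1 (Nat.log p s),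
        Real.logb 2 p * (1 / β + 1 / (p : ℝ) ^ k) ^ 2)
      ≤ 1.78 + 2 * Real.logb 2 s / β + (Real.logb 2 s) ^ 2 / β ^ 2 ∧
    (Real.logb 2 s ≤ β →
      (∑ p ∈ s.primeFactors, ∑ k ∈ Finset.Icc 1 (Nat.log p s),
          Real.logb 2 p * (1 / β + 1 / (p : ℝ) ^ k) ^ 2) ≤ 5) := by
  have hβ0 : (0:ℝ) < β := by linarith
  have hL : 0 ≤ Real.logb 2 s :=
    Real.logb_nonneg one_lt_two (by exact_mod_cast hs)
  have step1 : (∑ p ∈ s.primeFactors, ∑ k ∈ Finset.Icc 1 (Nat.log p s),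
        Real.logb 2 p * (1 / β + 1 / (p : ℝ) ^ k) ^ 2)
      ≤ ∑ p ∈ s.primeFactors,
          (Real.logb 2 p * ((Nat.log p s : ℝ)/β^2)
            + Real.logb 2 p * ((2/β) * (1/((p:ℝ)-1)))
            + Real.logb 2 p * (1/((p:ℝ)^2-1))) := by
    apply Finset.sum_le_sum
    intro p hp
    have hp2 := (Nat.prime_of_mem_primeFactors hp).two_le
    have hnn : 0 ≤ Real.logb 2 p := logb_nat_nonneg (by omega)
    rw [← Finset.mul_sum]
    calc Real.logb 2 p * ∑ k ∈ Finset.Icc 1 (Nat.log p s), (1 / β + 1 / (p : ℝ) ^ k) ^ 2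
        ≤ Real.logb 2 p * ((Nat.log p s : ℝ)/β^2 + (2/β) * (1/((p:ℝ)-1)) + 1/((p:ℝ)^2-1)) :=
          mul_le_mul_of_nonneg_left (inner_bound p (Nat.log p s) hp2 β hβ) hnn
      _ = _ := by ring
  rw [Finset.sum_add_distrib, Finset.sum_add_distrib] at step1
  have h1 : ∑ p ∈ s.primeFactors, Real.logb 2 p * ((Nat.log p s : ℝ)/β^2)
      ≤ (Real.logb 2 s)^2/β^2 := by
    have hnum : ∑ p ∈ s.primeFactors, Real.logb 2 p * (Nat.log p s : ℝ)
        ≤ (Real.logb 2 s)^2 := by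
      calc ∑ p ∈ s.primeFactors, Real.logb 2 p * (Nat.log p s : ℝ)
          ≤ ∑ p ∈ s.primeFactors, Real.logb 2 p * Real.logb 2 s := by
            apply Finset.sum_le_sum
            intro p hp
            have hp2 := (Nat.prime_of_mem_primeFactors hp).two_le
            exact mul_le_mul_of_nonneg_left (natlog_le_logb s p hs hp2)
              (logb_nat_nonneg (by omega))
        _ = (∑ p ∈ s.primeFactors, Real.logb 2 p) * Real.logb 2 s := by
            rw [Finset.sum_mul]
        _ ≤ Real.logb 2 s * Real.logb 2 s :=
            mul_le_mul_of_nonneg_right (sum_logb_le s hs) hL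
        _ = (Real.logb 2 s)^2 := by ring
    calc ∑ p ∈ s.primeFactors, Real.logb 2 p * ((Nat.log p s : ℝ)/β^2)
        = (∑ p ∈ s.primeFactors, Real.logb 2 p * (Nat.log p s : ℝ))/β^2 := by
          rw [Finset.sum_div]
          apply Finset.sum_congr rfl
          intro p _
          ring
      _ ≤ (Real.logb 2 s)^2/β^2 := by
          exact div_le_div_of_nonneg_right hnum (by positivity)
  have h2 : ∑ p ∈ s.primeFactors, Real.logb 2 p * ((2/β) * (1/((p:ℝ)-1)))
      ≤ 2 * Real.logb 2 s / β := by
    calc ∑ p ∈ s.primeFactors, Real.logb 2 p * ((2/β) * (1/((p:ℝ)-1)))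
        ≤ ∑ p ∈ s.primeFactors, (2/β) * Real.logb 2 p := by
          apply Finset.sum_le_sum
          intro p hp
          have hp2 := (Nat.prime_of_mem_primeFactors hp).two_le
          have hpR : (2:ℝ) ≤ (p:ℝ) := by exact_mod_cast hp2
          have hnn : 0 ≤ Real.logb 2 p := logb_nat_nonneg (by omega)
          have hfrac : 1/((p:ℝ)-1) ≤ 1 := by
            rw [div_le_one (by linarith)]; linarith
          calc Real.logb 2 p * ((2/β) * (1/((p:ℝ)-1)))
              ≤ Real.logb 2 p * ((2/β) * 1) := by
                apply mul_le_mul_of_nonneg_left _ hnn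
                apply mul_le_mul_of_nonneg_left hfrac (by positivity)
            _ = (2/β) * Real.logb 2 p := by ring
      _ = (2/β) * ∑ p ∈ s.primeFactors, Real.logb 2 p := by rw [Finset.mul_sum]
      _ ≤ (2/β) * Real.logb 2 s :=
          mul_le_mul_of_nonneg_left (sum_logb_le s hs) (by positivity)
      _ = 2 * Real.logb 2 s / β := by ring
  have h3 : ∑ p ∈ s.primeFactors, Real.logb 2 p * (1/((p:ℝ)^2-1)) ≤ 1.78 := by
    refine le_trans (le_of_eq ?_) (C_lemma s hs)
    apply Finset.sum_congr rfl
    intro p _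
    rw [mul_one_div]
  constructor
  · linarith
  · intro hLβ
    have k1 : 2 * Real.logb 2 s / β ≤ 2 := by
      rw [div_le_iff₀ hβ0]; linarith
    have k2 : (Real.logb 2 s)^2 / β^2 ≤ 1 := by
      rw [div_le_one (by positivity)]
      nlinarith
    linarith
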